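/- For (z₀,z₁,z₂,z₃,z₄) ∈ ℝ⁵, all five partial derivatives of f = z₁z₄² + z₀z₂z₄ - z₀²z₃ vanish simultaneously if and only if z₀ = 0 and z₄ = 0. Consequently the singular locus of the projective cubic F is the 2-plane at infinity {z₀ = z₄ = 0}. -/

import Mathlib

/-- All five partial derivatives of f = z₁z₄² + z₀z₂z₄ - z₀²z₃ vanish
simultaneously iff z₀ = 0 and z₄ = 0; the singular locus of F is the
2-plane at infinity {z₀ = z₄ = 0}. -/
theorem stmt_5
    (f : (Fin 5 → ℝ) → ℝ)
    (hf : f = fun z => z 1 * (z 4) ^ 2 + z 0 * z 2 * z 4 - (z 0) ^ 2 * z 3)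
    (z : Fin 5 → ℝ) :
    (∀ i : Fin 5, deriv (fun t => f (Function.update z i t)) (z i) = 0) ↔
      z 0 = 0 ∧ z 4 = 0 := by
  subst hf
  constructor
  · intro h
    have h1 := h 1
    have h3 := h 3
    simp (config := { decide := true }) [Function.update] at h1 h3
    have d3 : deriv (fun t => z 1 * z 4 ^ 2 + z 0 * z 2 * z 4 - z 0 ^ 2 * t) (z 3)
        = -(z 0 ^ 2) := by
      have := (hasDerivAt_const (z 3) (z 1 * z 4 ^ 2 + z 0 * z 2 * z 4)).sub
        ((hasDerivAt_id (z 3)).const_mul (z 0 ^ 2))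
      simpa using this.deriv
    exact ⟨by nlinarith, h1⟩
  · rintro ⟨h0, h4⟩ i
    fin_cases i <;> simp (config := { decide := true }) [Function.update, h0, h4]
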